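/- arXiv:1804.09233 — 4 statements merged into one kernel-verified Lean document; each statement's English description precedes it below -/
import Mathlib

section
/- Fix E ≥ 0 groups indexed by e ∈ {0, 1, …, E} with sizes K_e ≥ 1, real parameters a_e, b_e, positive parameters c_e, and λ > 0, α > 0, β > 0. Let x_{e,k} ∈ ℝ for each e and k ∈ {1,…,K_e} be given data, and set N = Σ_{e=0}^E K_e, α' = α + N/2, 1/λ' = Σ_{e=0}^E K_e b_e²/c_e² + 1/λ, m' = λ' · Σ_{e=0}^E (b_e/c_e²) · Σ_{k=1}^{K_e} (x_{e,k} − a_e), β' = β + (1/2)·( Σ_{e=0}^E Σ_{k=1}^{K_e} (x_{e,k} − a_e)²/c_e² − m'²/λ' ). Then for all z ∈ ℝ and all τ > 0, g_{α,β}(τ) · φ_{0, λ/τ}(z) · ∏_{e=0}^E ∏_{k=1}^{K_e} φ_{a_e + b_e z, c_e²/τ}(x_{e,k}) = C · g_{α',β'}(τ) · φ_{m', λ'/τ}(z), where C = (β^α · Γ(α')) / (Γ(α) · β'^{α'}) · √(λ'/λ) · ∏_{e=0}^E (2π c_e²)^{−K_e/2}. In particular, the posterior of (Z, τ) given the data in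 the exchangeable Gamma-Normal mixed effect model is again a Normal-Gamma distribution with parameters (m', λ', α', β'). -/
open MeasureTheory Real

/-- The Gamma(α, β) probability density function. -/
noncomputable def gammaPdf (a b t : ℝ) : ℝ :=
  if 0 < t then b ^ a / Real.Gamma a * t ^ (a - 1) * Real.exp (-b * t) else 0

/-- The normal probability density function with mean `m` and variance `v`. -/
noncomputable def normalPdf (m v x : ℝ) : ℝ :=
  (2 * Real.pi * v) ^ (-(1 : ℝ) / 2) * Real.exp (-(x - m) ^ 2 / (2 * v))

lemma normal_decomp (m v τ y : ℝ) (hv : 0 < v) (hτ : 0 < τ) :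
    normalPdf m (v / τ) y =
      (2 * Real.pi * v) ^ (-(1 : ℝ) / 2) * τ ^ ((1 : ℝ) / 2) *
        Real.exp (-((y - m) ^ 2 / (2 * v)) * τ) := by
  unfold normalPdf
  have h1 : (0:ℝ) < 2 * Real.pi * v := by positivity
  rw [show 2 * Real.pi * (v / τ) = (2 * Real.pi * v) / τ by ring,
    Real.div_rpow h1.le hτ.le,
    show -(1:ℝ)/2 = -((1:ℝ)/2) by norm_num, Real.rpow_neg hτ.le,
    div_eq_mul_inv, inv_inv]
  congr 1
  field_simp

set_option maxHeartbeats 1000000 in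
/-- In the exchangeable Gamma-Normal mixed effect model, the joint density of the latent
pair `(Z, τ)` and the data factorizes as a constant times a Normal-Gamma density with
updated parameters `(m', λ', α', β')`: the posterior is again Normal-Gamma. -/
theorem posterior_normal_gamma
    (E : ℕ) (K : Fin (E + 1) → ℕ) (hK : ∀ e, 1 ≤ K e)
    (a b c : Fin (E + 1) → ℝ) (hc : ∀ e, 0 < c e)
    (lam α β : ℝ) (hlam : 0 < lam) (hα : 0 < α) (hβ : 0 < β)
    (x : (e : Fin (E + 1)) → Fin (K e) → ℝ)
    (N : ℕ) (hN : N = ∑ e, K e)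
    (α' : ℝ) (hα' : α' = α + (N : ℝ) / 2)
    (lam' : ℝ) (hlam' : lam'⁻¹ = (∑ e, (K e : ℝ) * (b e) ^ 2 / (c e) ^ 2) + lam⁻¹)
    (m' : ℝ) (hm' : m' = lam' * ∑ e, (b e / (c e) ^ 2) * ∑ k, (x e k - a e))
    (β' : ℝ)
    (hβ' : β' = β + (1 / 2) *
      ((∑ e, ∑ k, (x e k - a e) ^ 2 / (c e) ^ 2) - m' ^ 2 / lam'))
    (C : ℝ)
    (hC : C = β ^ α * Real.Gamma α' / (Real.Gamma α * β' ^ α') * Real.sqrt (lam' / lam) *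
      ∏ e, (2 * Real.pi * (c e) ^ 2) ^ (-(K e : ℝ) / 2)) :
    ∀ z : ℝ, ∀ τ : ℝ, 0 < τ →
      gammaPdf α β τ * normalPdf 0 (lam / τ) z *
        (∏ e, ∏ k, normalPdf (a e + b e * z) ((c e) ^ 2 / τ) (x e k)) =
      C * gammaPdf α' β' τ * normalPdf m' (lam' / τ) z := by
  intro z τ hτ
  have hπ := Real.pi_pos
  have hc2 : ∀ e, (0:ℝ) < (c e) ^ 2 := fun e => pow_pos (hc e) 2
  have hcne : ∀ e, c e ≠ 0 := fun e => (hc e).ne'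
  have hlamne : lam ≠ 0 := hlam.ne'
  -- positivity of lam'
  have hTnn : (0:ℝ) ≤ ∑ e, (K e : ℝ) * (b e) ^ 2 / (c e) ^ 2 :=
    Finset.sum_nonneg fun e _ => by positivity
  have hQ0nn : (0:ℝ) ≤ ∑ e, ∑ k, (x e k - a e) ^ 2 / (c e) ^ 2 :=
    Finset.sum_nonneg fun e _ => Finset.sum_nonneg fun k _ => by positivity
  have hinv : 0 < lam'⁻¹ := by
    rw [hlam']; exact add_pos_of_nonneg_of_pos hTnn (inv_pos.mpr hlam)
  have hlam'pos : 0 < lam' := inv_pos.mp hinv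
  have hlam'ne : lam' ≠ 0 := hlam'pos.ne'
  -- Cauchy-Schwarz: S² ≤ T·Q₀
  have hCS : (∑ e, (b e / (c e) ^ 2) * ∑ k, (x e k - a e)) ^ 2 ≤
      (∑ e, (K e : ℝ) * (b e) ^ 2 / (c e) ^ 2) *
        (∑ e, ∑ k, (x e k - a e) ^ 2 / (c e) ^ 2) := by
    have h1 : (∑ e, (b e / (c e) ^ 2) * ∑ k, (x e k - a e)) =
        ∑ e, ∑ k, (b e / c e) * ((x e k - a e) / c e) := by
      refine Finset.sum_congr rfl fun e _ => ?_
      rw [Finset.mul_sum]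
      refine Finset.sum_congr rfl fun k _ => ?_
      field_simp
    have h2 : (∑ e, (K e : ℝ) * (b e) ^ 2 / (c e) ^ 2) =
        ∑ e, ∑ _k : Fin (K e), (b e / c e) ^ 2 := by
      refine Finset.sum_congr rfl fun e _ => ?_
      rw [Finset.sum_const, Finset.card_univ]
      simp only [Fintype.card_fin, nsmul_eq_mul, div_pow]
      ring
    have h3 : (∑ e, ∑ k, (x e k - a e) ^ 2 / (c e) ^ 2) =
        ∑ e, ∑ k, ((x e k - a e) / c e) ^ 2 := by
      simp [div_pow]
    rw [h1, h2, h3, Finset.sum_sigma', Finset.sum_sigma', Finset.sum_sigma']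
    exact Finset.sum_mul_sq_le_sq_mul_sq _ _ _
  have hTle : (∑ e, (K e : ℝ) * (b e) ^ 2 / (c e) ^ 2) ≤ lam'⁻¹ := by
    rw [hlam']; have := inv_pos.mpr hlam; linarith
  -- β' > 0
  have hm2 : m' ^ 2 / lam' = lam' * (∑ e, (b e / (c e) ^ 2) * ∑ k, (x e k - a e)) ^ 2 := by
    rw [hm']; field_simp
  have hβ'pos : 0 < β' := by
    have h1 : lam' * (∑ e, (b e / (c e) ^ 2) * ∑ k, (x e k - a e)) ^ 2 ≤
        (∑ e, ∑ k, (x e k - a e) ^ 2 / (c e) ^ 2) := by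
      calc lam' * (∑ e, (b e / (c e) ^ 2) * ∑ k, (x e k - a e)) ^ 2
          ≤ lam' * ((∑ e, (K e : ℝ) * (b e) ^ 2 / (c e) ^ 2) *
              (∑ e, ∑ k, (x e k - a e) ^ 2 / (c e) ^ 2)) :=
            mul_le_mul_of_nonneg_left hCS hlam'pos.le
        _ ≤ lam' * (lam'⁻¹ * (∑ e, ∑ k, (x e k - a e) ^ 2 / (c e) ^ 2)) :=
            mul_le_mul_of_nonneg_left (mul_le_mul_of_nonneg_right hTle hQ0nn) hlam'pos.le
        _ = ∑ e, ∑ k, (x e k - a e) ^ 2 / (c e) ^ 2 := by field_simp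
    rw [hβ', hm2]; linarith
  have hα'pos : 0 < α' := by rw [hα']; positivity
  have hΓα' : 0 < Real.Gamma α' := Real.Gamma_pos_of_pos hα'pos
  have hΓα : 0 < Real.Gamma α := Real.Gamma_pos_of_pos hα
  -- product decomposition
  have step1 : ∀ e : Fin (E + 1),
      (∏ k, normalPdf (a e + b e * z) ((c e) ^ 2 / τ) (x e k)) =
        (2 * Real.pi * (c e) ^ 2) ^ (-(K e : ℝ) / 2) * (τ ^ ((1:ℝ)/2)) ^ (K e) *
          Real.exp (-(∑ k, (x e k - (a e + b e * z)) ^ 2 / (2 * (c e) ^ 2)) * τ) := by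
    intro e
    have hb : (0:ℝ) < 2 * Real.pi * (c e) ^ 2 := mul_pos (by positivity) (hc2 e)
    rw [Finset.prod_congr rfl
      (fun k _ => normal_decomp (a e + b e * z) ((c e) ^ 2) τ (x e k) (hc2 e) hτ)]
    rw [Finset.prod_mul_distrib, Finset.prod_mul_distrib, Finset.prod_const,
      Finset.prod_const, ← Real.exp_sum, Finset.card_univ, Fintype.card_fin]
    congr 1
    · congr 1
      rw [← Real.rpow_natCast ((2 * Real.pi * (c e) ^ 2) ^ (-(1:ℝ)/2)) (K e),
        ← Real.rpow_mul hb.le]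
      congr 1
      ring
    · congr 1
      rw [← Finset.sum_mul, Finset.sum_neg_distrib]
  have hprod : (∏ e, ∏ k, normalPdf (a e + b e * z) ((c e) ^ 2 / τ) (x e k)) =
      (∏ e, (2 * Real.pi * (c e) ^ 2) ^ (-(K e : ℝ) / 2)) * τ ^ ((N:ℝ)/2) *
        Real.exp (-(∑ e, ∑ k, (x e k - (a e + b e * z)) ^ 2 / (2 * (c e) ^ 2)) * τ) := by
    rw [Finset.prod_congr rfl (fun e _ => step1 e), Finset.prod_mul_distrib,
      Finset.prod_mul_distrib, Finset.prod_pow_eq_pow_sum, ← Real.exp_sum]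
    congr 1
    · congr 1
      rw [← hN, ← Real.rpow_natCast (τ ^ ((1:ℝ)/2)) N, ← Real.rpow_mul hτ.le]
      congr 1
      ring
    · congr 1
      rw [← Finset.sum_mul, Finset.sum_neg_distrib]
  -- expansion of the quadratic sum
  have hW : (∑ e, ∑ k, (x e k - (a e + b e * z)) ^ 2 / (2 * (c e) ^ 2)) =
      (∑ e, ∑ k, (x e k - a e) ^ 2 / (c e) ^ 2) / 2 -
        z * (∑ e, (b e / (c e) ^ 2) * ∑ k, (x e k - a e)) +
        z ^ 2 / 2 * (∑ e, (K e : ℝ) * (b e) ^ 2 / (c e) ^ 2) := by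
    have he : ∀ e : Fin (E + 1),
        (∑ k, (x e k - (a e + b e * z)) ^ 2 / (2 * (c e) ^ 2)) =
          (∑ k, (x e k - a e) ^ 2 / (c e) ^ 2) / 2 -
            z * ((b e / (c e) ^ 2) * ∑ k, (x e k - a e)) +
            z ^ 2 / 2 * ((K e : ℝ) * (b e) ^ 2 / (c e) ^ 2) := by
      intro e
      have expand : ∀ k, (x e k - (a e + b e * z)) ^ 2 / (2 * (c e) ^ 2) =
          ((x e k - a e) ^ 2 / (c e) ^ 2) / 2 -
            (z * (b e / (c e) ^ 2)) * (x e k - a e) +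
            z ^ 2 / 2 * ((b e) ^ 2 / (c e) ^ 2) := by
        intro k
        field_simp
        ring
      rw [Finset.sum_congr rfl fun k _ => expand k, Finset.sum_add_distrib,
        Finset.sum_sub_distrib, ← Finset.sum_div, ← Finset.mul_sum, Finset.sum_const,
        Finset.card_univ, Fintype.card_fin, nsmul_eq_mul]
      ring
    rw [Finset.sum_congr rfl fun e _ => he e, Finset.sum_add_distrib,
      Finset.sum_sub_distrib, ← Finset.sum_div, ← Finset.mul_sum, ← Finset.mul_sum]
  -- exponent identity
  have hexpo : β + (z - 0) ^ 2 / (2 * lam) +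
      (∑ e, ∑ k, (x e k - (a e + b e * z)) ^ 2 / (2 * (c e) ^ 2)) =
      β' + (z - m') ^ 2 / (2 * lam') := by
    have hT : (∑ e, (K e : ℝ) * (b e) ^ 2 / (c e) ^ 2) = lam'⁻¹ - lam⁻¹ := by
      rw [hlam']; ring
    rw [hW, hT, hβ', hm']
    field_simp
    ring
  have hexp : Real.exp (-β * τ) * Real.exp (-((z - 0) ^ 2 / (2 * lam)) * τ) *
      Real.exp (-(∑ e, ∑ k, (x e k - (a e + b e * z)) ^ 2 / (2 * (c e) ^ 2)) * τ) =
      Real.exp (-β' * τ) * Real.exp (-((z - m') ^ 2 / (2 * lam')) * τ) := by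
    rw [← Real.exp_add, ← Real.exp_add, ← Real.exp_add]
    congr 1
    linear_combination (-τ) * hexpo
  -- τ-power identity
  have hτpow : τ ^ (α - 1) * τ ^ ((N:ℝ)/2) = τ ^ (α' - 1) := by
    rw [← Real.rpow_add hτ]
    congr 1
    rw [hα']; ring
  -- constant identity
  have hconst : (2 * Real.pi * lam) ^ (-(1:ℝ)/2) =
      Real.sqrt (lam' / lam) * (2 * Real.pi * lam') ^ (-(1:ℝ)/2) := by
    have h1 : (0:ℝ) < 2 * Real.pi * lam := by positivity
    have h2 : (0:ℝ) < 2 * Real.pi * lam' := by positivity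
    rw [Real.sqrt_eq_rpow,
      show -(1:ℝ)/2 = -((1:ℝ)/2) by norm_num,
      Real.rpow_neg h1.le, Real.rpow_neg h2.le, ← Real.inv_rpow h2.le,
      ← Real.mul_rpow (by positivity) (by positivity)]
    rw [← Real.inv_rpow h1.le]
    congr 1
    field_simp
  -- assemble
  rw [gammaPdf, gammaPdf, if_pos hτ, if_pos hτ,
    normal_decomp 0 lam τ z hlam hτ, normal_decomp m' lam' τ z hlam'pos hτ, hprod, hC]
  have hβ'αne : β' ^ α' ≠ 0 := (Real.rpow_pos_of_pos hβ'pos α').ne'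
  calc β ^ α / Real.Gamma α * τ ^ (α - 1) * Real.exp (-β * τ) *
        ((2 * Real.pi * lam) ^ (-(1:ℝ)/2) * τ ^ ((1:ℝ)/2) *
          Real.exp (-((z - 0) ^ 2 / (2 * lam)) * τ)) *
        ((∏ e, (2 * Real.pi * (c e) ^ 2) ^ (-(K e : ℝ) / 2)) * τ ^ ((N:ℝ)/2) *
          Real.exp (-(∑ e, ∑ k, (x e k - (a e + b e * z)) ^ 2 / (2 * (c e) ^ 2)) * τ))
      = β ^ α / Real.Gamma α * (2 * Real.pi * lam) ^ (-(1:ℝ)/2) *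
          (∏ e, (2 * Real.pi * (c e) ^ 2) ^ (-(K e : ℝ) / 2)) *
          (τ ^ (α - 1) * τ ^ ((N:ℝ)/2)) * τ ^ ((1:ℝ)/2) *
          (Real.exp (-β * τ) * Real.exp (-((z - 0) ^ 2 / (2 * lam)) * τ) *
            Real.exp (-(∑ e, ∑ k, (x e k - (a e + b e * z)) ^ 2 / (2 * (c e) ^ 2)) * τ)) := by
        ring
    _ = β ^ α / Real.Gamma α *
          (Real.sqrt (lam' / lam) * (2 * Real.pi * lam') ^ (-(1:ℝ)/2)) *
          (∏ e, (2 * Real.pi * (c e) ^ 2) ^ (-(K e : ℝ) / 2)) *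
          τ ^ (α' - 1) * τ ^ ((1:ℝ)/2) *
          (Real.exp (-β' * τ) * Real.exp (-((z - m') ^ 2 / (2 * lam')) * τ)) := by
        rw [hconst, hτpow, hexp]
    _ = β ^ α * Real.Gamma α' / (Real.Gamma α * β' ^ α') * Real.sqrt (lam' / lam) *
          (∏ e, (2 * Real.pi * (c e) ^ 2) ^ (-(K e : ℝ) / 2)) *
          (β' ^ α' / Real.Gamma α' * τ ^ (α' - 1) * Real.exp (-β' * τ)) *
          ((2 * Real.pi * lam') ^ (-(1:ℝ)/2) * τ ^ ((1:ℝ)/2) *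
            Real.exp (-((z - m') ^ 2 / (2 * lam')) * τ)) := by
        have key : β ^ α / Real.Gamma α =
            β ^ α * Real.Gamma α' / (Real.Gamma α * β' ^ α') * (β' ^ α' / Real.Gamma α') := by
          field_simp
        rw [key]
        ring
end

section
/- Fix E ≥ 1 ensembles indexed by e ∈ {1, …, E} with sizes K_e ≥ 1, real parameters a_0, a_e, b_e, positive parameters c_e, and λ > 0, α > 0, β > 0. Let x_{e,k} ∈ ℝ be given data and define, for τ > 0, the joint density p(y, z, τ) = g_{α,β}(τ) · φ_{0, λ/τ}(z) · φ_{a_0 + z, 1/τ}(y) · ∏_{e=1}^E ∏_{k=1}^{K_e} φ_{a_e + b_e z, c_e²/τ}(x_{e,k}). Set α'' = α + (Σ_{e=1}^E K_e)/2, 1/λ'' = Σ_{e=1}^E K_e b_e²/c_e² + 1/λ, m'' = λ'' · Σ_{e=1}^E (b_e/c_e²) · Σ_{k=1}^{K_e} (x_{e,k} − a_e), and β'' = β + (1/2)·( Σ_{e=1}^E Σ_{k=1}^{K_e} (x_{e,k} − a_e)²/c_e² − m''²/λ'' ). Then for every y ∈ ℝ, ∫₀^∞ ∫_ℝ p(y,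 z, τ) dz dτ = ( ∫_ℝ ∫₀^∞ ∫_ℝ p(y', z, τ) dz dτ dy' ) · Γ(α'' + 1/2) / ( Γ(α'') · √(2π(λ'' + 1)β'') ) · ( 1 + (y − a_0 − m'')² / (2(λ'' + 1)β'') )^{−(α'' + 1/2)}. That is, the predictive distribution of Y given the ensembles is a Student distribution with 2α'' degrees of freedom, location a_0 + m'' and scale √((λ'' + 1)β''/α''). -/
open MeasureTheory Real

lemma gauss_shift (bb m : ℝ) :
    ∫ z : ℝ, Real.exp (-bb * (z - m) ^ 2) = Real.sqrt (π / bb) := by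
  rw [integral_sub_right_eq_self (μ := volume) (fun z : ℝ => Real.exp (-bb * z ^ 2)) m]
  exact integral_gaussian bb

lemma integral_one_add_sq_rpow_neg {s : ℝ} (hs : 1 / 2 < s) :
    ∫ t : ℝ, (1 + t ^ 2) ^ (-s) = Real.sqrt π * Real.Gamma (s - 1 / 2) / Real.Gamma s := by
  have hs0 : (0:ℝ) < s := by linarith
  have hΓ : (0:ℝ) < Real.Gamma s := Real.Gamma_pos_of_pos hs0
  set F : ℝ × ℝ → ℝ := fun q => q.1 ^ (s - 1) * Real.exp (-((1 + q.2 ^ 2) * q.1)) with hF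
  have hFmeas : AEStronglyMeasurable F ((volume.restrict (Set.Ioi (0:ℝ))).prod volume) := by
    apply Measurable.aestronglyMeasurable; fun_prop
  have hslicefun : ∀ u : ℝ, (fun t : ℝ => F (u, t))
      = fun t => (u ^ (s - 1) * Real.exp (-u)) * Real.exp (-u * t ^ 2) := by
    intro u; funext t
    rw [hF]; simp only
    rw [mul_assoc, ← Real.exp_add]
    congr 1; ring
  have hslice : ∀ u : ℝ, 0 < u →
      (∫ t : ℝ, F (u, t)) = Real.sqrt π * (Real.exp (-u) * u ^ (s - 1/2 - 1)) := by
    intro u hu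
    rw [hslicefun u, integral_const_mul, integral_gaussian]
    rw [show π / u = π * u⁻¹ by ring, Real.sqrt_mul pi_nonneg, Real.sqrt_inv]
    rw [show (Real.sqrt u)⁻¹ = u ^ (-(1/2) : ℝ) by
      rw [Real.rpow_neg hu.le, Real.sqrt_eq_rpow]]
    rw [show s - 1/2 - 1 = (s-1) + (-(1/2)) by ring, Real.rpow_add hu]
    ring
  have hInt : Integrable F ((volume.restrict (Set.Ioi (0:ℝ))).prod volume) := by
    rw [integrable_prod_iff hFmeas]
    constructor
    · filter_upwards [ae_restrict_mem measurableSet_Ioi] with u hu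
      rw [hslicefun u]
      exact (integrable_exp_neg_mul_sq hu).const_mul _
    · have hcongr : (fun u : ℝ => Real.sqrt π * (Real.exp (-u) * u ^ (s - 1/2 - 1)))
          =ᵐ[volume.restrict (Set.Ioi (0:ℝ))] (fun u => ∫ t : ℝ, ‖F (u, t)‖) := by
        filter_upwards [ae_restrict_mem measurableSet_Ioi] with u hu
        have hnn : ∀ t : ℝ, ‖F (u, t)‖ = F (u, t) := by
          intro t
          refine norm_of_nonneg ?_
          rw [hF]; simp only
          have : (0:ℝ) ≤ u ^ (s-1) := Real.rpow_nonneg hu.le _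
          positivity
        simp_rw [hnn]
        rw [hslice u hu]
      refine Integrable.congr ?_ hcongr
      exact ((Real.GammaIntegral_convergent (by linarith : (0:ℝ) < s - 1/2)).const_mul _)
  have hswap := integral_integral_swap (f := fun u t => F (u, t))
    (μ := volume.restrict (Set.Ioi (0:ℝ))) (ν := volume) hInt
  have hpt : ∀ t : ℝ, (1 + t ^ 2) ^ (-s) = (∫ u in Set.Ioi (0:ℝ), F (u, t)) / Real.Gamma s := by
    intro t
    have h1t : (0:ℝ) < 1 + t ^ 2 := by positivity
    have := Real.integral_rpow_mul_exp_neg_mul_Ioi hs0 h1t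
    rw [hF]; simp only
    rw [this, show (1/(1+t^2)) ^ s = (1+t^2) ^ (-s) by
      rw [one_div, Real.inv_rpow h1t.le, ← Real.rpow_neg h1t.le]]
    field_simp
  calc ∫ t : ℝ, (1 + t ^ 2) ^ (-s)
      = ∫ t : ℝ, (∫ u in Set.Ioi (0:ℝ), F (u, t)) / Real.Gamma s := by simp_rw [hpt]
    _ = (∫ t : ℝ, ∫ u in Set.Ioi (0:ℝ), F (u, t)) / Real.Gamma s := integral_div _ _
    _ = (∫ u in Set.Ioi (0:ℝ), ∫ t : ℝ, F (u, t)) / Real.Gamma s := by rw [← hswap]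
    _ = (∫ u in Set.Ioi (0:ℝ), Real.sqrt π * (Real.exp (-u) * u ^ (s - 1/2 - 1))) / Real.Gamma s := by
        rw [setIntegral_congr_fun measurableSet_Ioi (fun u hu => hslice u hu)]
    _ = Real.sqrt π * Real.Gamma (s - 1/2) / Real.Gamma s := by
        rw [integral_const_mul, ← Real.Gamma_eq_integral (by linarith : (0:ℝ) < s - 1/2)]

lemma exp_helper (g c1 c2 c3 e1 e2 e3 q1 q2 : ℝ) (h : e1 + e2 + e3 = q1 + q2) :
    g * (c1 * Real.exp e1) * (c2 * Real.exp e2) * (c3 * Real.exp e3)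
      = g * c1 * c2 * c3 * Real.exp q1 * Real.exp q2 := by
  rw [show g * (c1 * Real.exp e1) * (c2 * Real.exp e2) * (c3 * Real.exp e3)
      = g * c1 * c2 * c3 * (Real.exp e1 * Real.exp e2 * Real.exp e3) from by ring,
    ← Real.exp_add, ← Real.exp_add, h, Real.exp_add, ← mul_assoc]

set_option maxHeartbeats 1000000 in
/-- In the multi-ensemble exchangeable Gamma-Normal model, the predictive distribution of
`Y` given the ensembles is a Student distribution with `2α''` degrees of freedom,
location `a₀ + m''` and scale `√((λ'' + 1) β'' / α'')`. -/
theorem predictive_distribution_is_student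
    (E : ℕ) (hE : 1 ≤ E) (K : Fin E → ℕ) (hK : ∀ e, 1 ≤ K e)
    (a₀ : ℝ) (a b c : Fin E → ℝ) (hc : ∀ e, 0 < c e)
    (lam α β : ℝ) (hlam : 0 < lam) (hα : 0 < α) (hβ : 0 < β)
    (x : (e : Fin E) → Fin (K e) → ℝ)
    (p : ℝ → ℝ → ℝ → ℝ)
    (hp : ∀ y z τ, p y z τ =
      gammaPdf α β τ * normalPdf 0 (lam / τ) z * normalPdf (a₀ + z) (1 / τ) y *
        ∏ e, ∏ k, normalPdf (a e + b e * z) ((c e) ^ 2 / τ) (x e k))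
    (α'' : ℝ) (hα'' : α'' = α + (∑ e, (K e : ℝ)) / 2)
    (lam'' : ℝ) (hlam'' : lam''⁻¹ = (∑ e, (K e : ℝ) * (b e) ^ 2 / (c e) ^ 2) + lam⁻¹)
    (m'' : ℝ) (hm'' : m'' = lam'' * ∑ e, (b e / (c e) ^ 2) * ∑ k, (x e k - a e))
    (β'' : ℝ)
    (hβ'' : β'' = β + (1 / 2) *
      ((∑ e, ∑ k, (x e k - a e) ^ 2 / (c e) ^ 2) - m'' ^ 2 / lam'')) :
    ∀ y : ℝ,
      (∫ τ in Set.Ioi (0 : ℝ), ∫ z : ℝ, p y z τ) =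
      (∫ y' : ℝ, ∫ τ in Set.Ioi (0 : ℝ), ∫ z : ℝ, p y' z τ) *
        (Real.Gamma (α'' + 1 / 2) /
          (Real.Gamma α'' * Real.sqrt (2 * Real.pi * (lam'' + 1) * β''))) *
        (1 + (y - a₀ - m'') ^ 2 / (2 * (lam'' + 1) * β'')) ^ (-(α'' + 1 / 2)) := by
  set N : ℝ := ∑ e, (K e : ℝ) with hN
  set R : ℝ := ∑ e, (K e : ℝ) * (b e) ^ 2 / (c e) ^ 2 with hR
  set T : ℝ := ∑ e, (b e / (c e) ^ 2) * ∑ k, (x e k - a e) with hT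
  set S : ℝ := ∑ e, ∑ k, (x e k - a e) ^ 2 / (c e) ^ 2 with hS
  have hRnn : (0:ℝ) ≤ R := by
    rw [hR]; refine Finset.sum_nonneg fun e _ => by positivity
  have hSnn : (0:ℝ) ≤ S := by
    rw [hS]; refine Finset.sum_nonneg fun e _ => Finset.sum_nonneg fun k _ => by positivity
  have hlam''inv : 0 < lam''⁻¹ := by rw [hlam'']; positivity
  have hlam''pos : 0 < lam'' := inv_pos.mp hlam''inv
  have hlam''1 : (0:ℝ) < lam'' + 1 := by linarith
  -- Cauchy-Schwarz:
  have hCS : T ^ 2 ≤ R * S := by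
    have hCS := Finset.sum_mul_sq_le_sq_mul_sq Finset.univ
      (fun e => b e * Real.sqrt (K e) / c e)
      (fun e => (∑ k, (x e k - a e)) / (Real.sqrt (K e) * c e))
    have hKpos : ∀ e : Fin E, (0:ℝ) < Real.sqrt (K e) := fun e =>
      Real.sqrt_pos.mpr (by exact_mod_cast Nat.lt_of_lt_of_le Nat.zero_lt_one (hK e))
    have hKsq : ∀ e : Fin E, Real.sqrt (K e) ^ 2 = (K e : ℝ) := fun e =>
      Real.sq_sqrt (by positivity)
    have h1 : ∑ e, (b e * Real.sqrt (K e) / c e) * ((∑ k, (x e k - a e)) / (Real.sqrt (K e) * c e))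
        = ∑ e, (b e / (c e) ^ 2) * ∑ k, (x e k - a e) := by
      refine Finset.sum_congr rfl fun e _ => ?_
      have := (hKpos e).ne'
      have := (hc e).ne'
      field_simp
    have h2 : ∑ e, (b e * Real.sqrt (K e) / c e) ^ 2 = ∑ e, (K e : ℝ) * (b e) ^ 2 / (c e) ^ 2 := by
      refine Finset.sum_congr rfl fun e _ => ?_
      rw [div_pow, mul_pow, hKsq e]
      ring
    have h3 : ∑ e, ((∑ k, (x e k - a e)) / (Real.sqrt (K e) * c e)) ^ 2
        ≤ ∑ e, ∑ k, (x e k - a e) ^ 2 / (c e) ^ 2 := by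
      refine Finset.sum_le_sum fun e _ => ?_
      rw [div_pow, mul_pow, hKsq e]
      have hch : (∑ k, (x e k - a e)) ^ 2 ≤ (K e : ℝ) * ∑ k, (x e k - a e) ^ 2 := by
        have := sq_sum_le_card_mul_sum_sq (s := Finset.univ) (f := fun k : Fin (K e) => x e k - a e)
        simpa using this
      have hKe : (0:ℝ) < (K e : ℝ) := by exact_mod_cast hK e
      rw [div_le_iff₀ (mul_pos hKe (pow_pos (hc e) 2))]
      calc (∑ k, (x e k - a e)) ^ 2 ≤ (K e : ℝ) * ∑ k, (x e k - a e) ^ 2 := hch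
        _ = ∑ k, ((x e k - a e) ^ 2 / (c e) ^ 2) * ((K e : ℝ) * (c e) ^ 2) := by
            rw [Finset.mul_sum]
            refine Finset.sum_congr rfl fun k _ => ?_
            have := (hc e).ne'
            field_simp
        _ = (∑ k, (x e k - a e) ^ 2 / (c e) ^ 2) * ((K e : ℝ) * (c e) ^ 2) :=
            (Finset.sum_mul ..).symm
    calc (∑ e, (b e / (c e) ^ 2) * ∑ k, (x e k - a e)) ^ 2
        ≤ (∑ e, (b e * Real.sqrt (K e) / c e) ^ 2)
          * ∑ e, ((∑ k, (x e k - a e)) / (Real.sqrt (K e) * c e)) ^ 2 := by rw [← h1]; exact hCS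
      _ ≤ _ := by
          rw [h2]
          refine mul_le_mul_of_nonneg_left h3 ?_
          positivity
  have hβ''pos : 0 < β'' := by
    have h1 : m'' ^ 2 / lam'' = lam'' * T ^ 2 := by
      rw [hm'']; field_simp
    have hRl : lam'' * R ≤ 1 := by
      have h3 : lam'' * lam''⁻¹ = 1 := mul_inv_cancel₀ hlam''pos.ne'
      have h4 : lam'' * R + lam'' * lam⁻¹ = 1 := by
        rw [← mul_add, ← hlam'', h3]
      have : 0 ≤ lam'' * lam⁻¹ := by positivity
      linarith
    have h2 : lam'' * T ^ 2 ≤ S := by nlinarith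
    rw [hβ'', h1]; linarith
  have hα''pos : 0 < α'' := by
    rw [hα'']; have : (0:ℝ) ≤ N := by rw [hN]; positivity
    linarith
  set s : ℝ := α'' + 1/2 with hs
  have hspos : (0:ℝ) < s := by rw [hs]; linarith
  have hshalf : 1/2 < s := by rw [hs]; linarith
  have hsval : s = α + N/2 + 1/2 := by rw [hs, hα'']
  set A : ℝ := lam''⁻¹ + 1 with hA
  have hApos : 0 < A := by positivity
  have hAeq : A = (lam'' + 1) / lam'' := by rw [hA]; field_simp; ring
  -- quadratic identity
  have hquad : ∀ y z : ℝ,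
      (z - 0) ^ 2 / lam + (y - (a₀ + z)) ^ 2 / 1
          + ∑ e, ∑ k, (x e k - (a e + b e * z)) ^ 2 / (c e) ^ 2
        = A * (z - (y - a₀ + T) / A) ^ 2
          + (2 * (β'' - β) + (y - a₀ - m'') ^ 2 / (lam'' + 1)) := by
    intro y z
    have hsum : ∑ e, ∑ k, (x e k - (a e + b e * z)) ^ 2 / (c e) ^ 2
        = S - 2 * z * T + z ^ 2 * R := by
      have he : ∀ e : Fin E, ∑ k, (x e k - (a e + b e * z)) ^ 2 / (c e) ^ 2
          = (∑ k, (x e k - a e) ^ 2 / (c e) ^ 2)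
            - 2 * z * ((b e / (c e) ^ 2) * ∑ k, (x e k - a e))
            + z ^ 2 * ((K e : ℝ) * (b e) ^ 2 / (c e) ^ 2) := by
        intro e
        have hce := (hc e).ne'
        calc ∑ k, (x e k - (a e + b e * z)) ^ 2 / (c e) ^ 2
            = ∑ k, ((x e k - a e) ^ 2 / (c e) ^ 2
                - (2 * z * (b e / (c e) ^ 2)) * (x e k - a e)
                + z ^ 2 * ((b e) ^ 2 / (c e) ^ 2)) := by
              refine Finset.sum_congr rfl fun k _ => ?_
              field_simp
              ring
          _ = _ := by
              rw [Finset.sum_add_distrib, Finset.sum_sub_distrib, ← Finset.mul_sum,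
                Finset.sum_const, Finset.card_univ, Fintype.card_fin]
              push_cast
              ring
      calc ∑ e, ∑ k, (x e k - (a e + b e * z)) ^ 2 / (c e) ^ 2
          = ∑ e, ((∑ k, (x e k - a e) ^ 2 / (c e) ^ 2)
              - 2 * z * ((b e / (c e) ^ 2) * ∑ k, (x e k - a e))
              + z ^ 2 * ((K e : ℝ) * (b e) ^ 2 / (c e) ^ 2)) :=
            Finset.sum_congr rfl fun e _ => he e
        _ = S - 2 * z * T + z ^ 2 * R := by
            rw [Finset.sum_add_distrib, Finset.sum_sub_distrib, ← Finset.mul_sum,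
              ← Finset.mul_sum, ← hS, ← hT, ← hR]
    rw [hsum]
    have hb2 : 2 * (β'' - β) = S - lam'' * T ^ 2 := by
      rw [hβ'', hm'']; field_simp; ring
    have hR2 : R = lam''⁻¹ - lam⁻¹ := by rw [hlam'']; ring
    have hA2 : A = (lam'' + 1) / lam'' := by rw [hA]; field_simp; ring
    rw [hb2, hm'', hR2, hA2]
    have h1 : lam ≠ 0 := hlam.ne'
    have h2 : lam'' ≠ 0 := hlam''pos.ne'
    have h3 : lam'' + 1 ≠ 0 := by positivity
    field_simp
    ring
  set κ : ℝ := -(1/2) * Real.log (2*π*lam) - (1/2) * Real.log (2*π)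
      - (1/2) * (∑ e, (K e : ℝ) * Real.log (2*π*(c e)^2)) + (1/2) * Real.log (2*π/A) with hκ
  set C : ℝ := β ^ α / Real.Gamma α * Real.exp κ * Real.Gamma s with hC
  have hrpos : ∀ y : ℝ, 0 < β'' + (y - a₀ - m'') ^ 2 / (2*(lam''+1)) := by
    intro y; positivity
  have hL : ∀ y : ℝ, (∫ τ in Set.Ioi (0:ℝ), ∫ z : ℝ, p y z τ)
      = C * (β'' + (y - a₀ - m'') ^ 2 / (2*(lam''+1))) ^ (-s) := by
    intro y
    set r : ℝ := β'' + (y - a₀ - m'') ^ 2 / (2*(lam''+1)) with hrdef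
    have hrp : 0 < r := hrpos y
    have hzint : ∀ τ ∈ Set.Ioi (0:ℝ), (∫ z : ℝ, p y z τ)
        = (β ^ α / Real.Gamma α * Real.exp κ) * (τ ^ (s - 1) * Real.exp (-(r * τ))) := by
      intro τ hτ'
      have hτ : (0:ℝ) < τ := hτ'
      have hτ0 : τ ≠ 0 := ne_of_gt hτ
      have hprod : ∀ z : ℝ, (∏ e, ∏ k, normalPdf (a e + b e * z) ((c e)^2 / τ) (x e k))
          = (∏ e, ((2 * π * ((c e)^2 / τ)) ^ (-(1:ℝ)/2)) ^ (K e))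
            * Real.exp (∑ e, ∑ k, -(x e k - (a e + b e * z)) ^ 2 / (2 * ((c e)^2 / τ))) := by
        intro z
        simp only [normalPdf]
        calc ∏ e, ∏ k, ((2 * π * ((c e)^2 / τ)) ^ (-(1:ℝ)/2)
                * Real.exp (-(x e k - (a e + b e * z)) ^ 2 / (2 * ((c e)^2 / τ))))
            = ∏ e, (((2 * π * ((c e)^2 / τ)) ^ (-(1:ℝ)/2)) ^ (K e)
                * Real.exp (∑ k, -(x e k - (a e + b e * z)) ^ 2 / (2 * ((c e)^2 / τ)))) := by
              refine Finset.prod_congr rfl fun e _ => ?_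
              rw [Finset.prod_mul_distrib, Finset.prod_const, Finset.card_univ,
                Fintype.card_fin, Real.exp_sum]
          _ = _ := by rw [Finset.prod_mul_distrib, Real.exp_sum]
      have hEXP : ∀ z : ℝ,
          -(z - 0) ^ 2 / (2 * (lam / τ)) + -(y - (a₀ + z)) ^ 2 / (2 * (1 / τ))
            + ∑ e, ∑ k, -(x e k - (a e + b e * z)) ^ 2 / (2 * ((c e)^2 / τ))
          = -((2 * (β'' - β) + (y - a₀ - m'') ^ 2 / (lam'' + 1)) / 2 * τ)
            + -(τ * A / 2) * (z - (y - a₀ + T) / A) ^ 2 := by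
        intro z
        have hsum2 : ∑ e, ∑ k, -(x e k - (a e + b e * z)) ^ 2 / (2 * ((c e)^2 / τ))
            = -(τ/2) * ∑ e, ∑ k, (x e k - (a e + b e * z)) ^ 2 / (c e) ^ 2 := by
          rw [Finset.mul_sum]
          refine Finset.sum_congr rfl fun e _ => ?_
          rw [Finset.mul_sum]
          refine Finset.sum_congr rfl fun k _ => ?_
          have hce := (hc e).ne'
          field_simp
        have h2 : -(z - 0) ^ 2 / (2 * (lam / τ)) = -(τ/2) * ((z - 0) ^ 2 / lam) := by
          field_simp
        have h3 : -(y - (a₀ + z)) ^ 2 / (2 * (1 / τ)) = -(τ/2) * ((y - (a₀ + z)) ^ 2 / 1) := by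
          field_simp
        rw [hsum2, h2, h3]
        linear_combination (-(τ/2)) * hquad y z
      have hpt : ∀ z : ℝ, p y z τ
          = gammaPdf α β τ * (2 * π * (lam / τ)) ^ (-(1:ℝ)/2) * (2 * π * (1 / τ)) ^ (-(1:ℝ)/2)
            * (∏ e, ((2 * π * ((c e)^2 / τ)) ^ (-(1:ℝ)/2)) ^ (K e))
            * Real.exp (-((2 * (β'' - β) + (y - a₀ - m'') ^ 2 / (lam'' + 1)) / 2 * τ))
            * Real.exp (-(τ * A / 2) * (z - (y - a₀ + T) / A) ^ 2) := by
        intro z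
        rw [hp, hprod z]
        simp only [normalPdf]
        exact exp_helper _ _ _ _ _ _ _ _ _ (hEXP z)
      calc (∫ z : ℝ, p y z τ)
          = ∫ z : ℝ, (gammaPdf α β τ * (2 * π * (lam / τ)) ^ (-(1:ℝ)/2)
              * (2 * π * (1 / τ)) ^ (-(1:ℝ)/2)
              * (∏ e, ((2 * π * ((c e)^2 / τ)) ^ (-(1:ℝ)/2)) ^ (K e))
              * Real.exp (-((2 * (β'' - β) + (y - a₀ - m'') ^ 2 / (lam'' + 1)) / 2 * τ)))
              * Real.exp (-(τ * A / 2) * (z - (y - a₀ + T) / A) ^ 2) := by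
            simp only [hpt]
        _ = (gammaPdf α β τ * (2 * π * (lam / τ)) ^ (-(1:ℝ)/2)
              * (2 * π * (1 / τ)) ^ (-(1:ℝ)/2)
              * (∏ e, ((2 * π * ((c e)^2 / τ)) ^ (-(1:ℝ)/2)) ^ (K e))
              * Real.exp (-((2 * (β'' - β) + (y - a₀ - m'') ^ 2 / (lam'' + 1)) / 2 * τ)))
              * Real.sqrt (π / (τ * A / 2)) := by
            rw [integral_const_mul, gauss_shift (τ * A / 2) ((y - a₀ + T) / A)]
        _ = (β ^ α / Real.Gamma α * Real.exp κ) * (τ ^ (s - 1) * Real.exp (-(r * τ))) := by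
            simp only [gammaPdf]
            rw [if_pos hτ]
            rw [show (2 : ℝ) * π * (lam / τ) = (2 * π * lam) / τ from by ring,
              show (2 : ℝ) * π * (1 / τ) = (2 * π) / τ from by ring,
              Real.rpow_def_of_pos (by positivity : (0:ℝ) < (2 * π * lam) / τ),
              Real.rpow_def_of_pos (by positivity : (0:ℝ) < (2 * π) / τ),
              Real.log_div (by positivity : (2:ℝ) * π * lam ≠ 0) hτ0,
              Real.log_div (by positivity : (2:ℝ) * π ≠ 0) hτ0,
              Real.rpow_def_of_pos hτ]
            have e3' : (∏ e, ((2 * π * ((c e)^2 / τ)) ^ (-(1:ℝ)/2)) ^ (K e))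
                = Real.exp (∑ e, (K e : ℝ) * ((Real.log (2 * π * (c e)^2) - Real.log τ) * (-(1:ℝ)/2))) := by
              rw [Real.exp_sum]
              refine Finset.prod_congr rfl fun e _ => ?_
              have hce := hc e
              rw [show (2 : ℝ) * π * ((c e)^2 / τ) = (2 * π * (c e)^2) / τ from by ring,
                Real.rpow_def_of_pos (by positivity : (0:ℝ) < (2 * π * (c e)^2) / τ),
                Real.log_div (by positivity : (2:ℝ) * π * (c e)^2 ≠ 0) hτ0,
                ← Real.exp_nat_mul]
            rw [e3']
            have e4' : Real.sqrt (π / (τ * A / 2))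
                = Real.exp ((Real.log (2 * π / A) - Real.log τ) * ((1:ℝ)/2)) := by
              rw [show π / (τ * A / 2) = (2 * π / A) / τ from by
                  field_simp, Real.sqrt_eq_rpow,
                Real.rpow_def_of_pos (by positivity : (0:ℝ) < (2 * π / A) / τ),
                Real.log_div (by positivity : (2:ℝ) * π / A ≠ 0) hτ0]
            rw [e4']
            rw [show τ ^ (s - 1) = Real.exp (Real.log τ * (s - 1)) from
              (Real.rpow_def_of_pos hτ _)]
            have hsplit : ∑ e, (K e : ℝ) * ((Real.log (2 * π * (c e)^2) - Real.log τ) * (-(1:ℝ)/2))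
                = -(1/2) * (∑ e, (K e : ℝ) * Real.log (2 * π * (c e)^2))
                  + (1/2) * N * Real.log τ := by
              rw [hN, Finset.mul_sum, Finset.mul_sum, Finset.sum_mul, ← Finset.sum_add_distrib]
              refine Finset.sum_congr rfl fun e _ => ?_
              ring
            rw [hsplit]
            simp only [mul_assoc, ← Real.exp_add]
            congr 1
            rw [Real.exp_eq_exp]
            rw [hκ, hsval, hrdef,
              show (2:ℝ) * (lam'' + 1) = (lam'' + 1) * 2 from by ring, ← div_div]
            simp only [mul_assoc]
            generalize (∑ e, (K e : ℝ) * Real.log (2 * (π * (c e)^2))) = LS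
            ring
    calc (∫ τ in Set.Ioi (0:ℝ), ∫ z : ℝ, p y z τ)
        = ∫ τ in Set.Ioi (0:ℝ), (β ^ α / Real.Gamma α * Real.exp κ)
            * (τ ^ (s - 1) * Real.exp (-(r * τ))) :=
          setIntegral_congr_fun measurableSet_Ioi (fun τ hτ => hzint τ hτ)
      _ = (β ^ α / Real.Gamma α * Real.exp κ)
            * ∫ τ in Set.Ioi (0:ℝ), τ ^ (s - 1) * Real.exp (-(r * τ)) := integral_const_mul _ _
      _ = (β ^ α / Real.Gamma α * Real.exp κ) * ((1 / r) ^ s * Real.Gamma s) := by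
          rw [Real.integral_rpow_mul_exp_neg_mul_Ioi hspos hrp]
      _ = C * r ^ (-s) := by
          rw [hC, one_div, Real.inv_rpow hrp.le, ← Real.rpow_neg hrp.le]
          ring
  intro y
  rw [hL y]
  have hΓα'' : (0:ℝ) < Real.Gamma α'' := Real.Gamma_pos_of_pos hα''pos
  have hΓs : (0:ℝ) < Real.Gamma s := Real.Gamma_pos_of_pos hspos
  set d : ℝ := Real.sqrt (2*(lam''+1)*β'') with hd
  have hdpos : 0 < d := Real.sqrt_pos.mpr (by positivity)
  have hdsq : d ^ 2 = 2*(lam''+1)*β'' := Real.sq_sqrt (by positivity)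
  have hmar : (∫ y' : ℝ, ∫ τ in Set.Ioi (0:ℝ), ∫ z : ℝ, p y' z τ)
      = C * (d * (β'' ^ (-s) * (Real.sqrt π * Real.Gamma α'' / Real.Gamma s))) := by
    simp only [hL]
    rw [integral_const_mul]
    congr 1
    have hshift : (∫ y' : ℝ, (β'' + (y' - a₀ - m'') ^ 2 / (2*(lam''+1))) ^ (-s))
        = ∫ w : ℝ, (β'' + w ^ 2 / (2*(lam''+1))) ^ (-s) := by
      have h := integral_sub_right_eq_self (μ := volume)
        (fun w : ℝ => (β'' + w ^ 2 / (2*(lam''+1))) ^ (-s)) (a₀ + m'')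
      simp only [← sub_sub] at h
      exact h
    rw [hshift]
    have hptw : ∀ w : ℝ, (β'' + w ^ 2 / (2*(lam''+1))) ^ (-s)
        = β'' ^ (-s) * (1 + (d⁻¹ * w) ^ 2) ^ (-s) := by
      intro w
      rw [← Real.mul_rpow hβ''pos.le (by positivity)]
      congr 1
      have hd2 : (d⁻¹ * w) ^ 2 = w ^ 2 / (2*(lam''+1)*β'') := by
        rw [mul_pow, ← hdsq]
        field_simp
      rw [hd2]
      field_simp
    simp only [hptw]
    rw [integral_const_mul,
      Measure.integral_comp_mul_left (fun t : ℝ => (1 + t ^ 2) ^ (-s)) d⁻¹,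
      integral_one_add_sq_rpow_neg hshalf, inv_inv, abs_of_pos hdpos, smul_eq_mul,
      show s - 1/2 = α'' from by rw [hs]; ring]
    ring
  rw [hmar]
  have hsqrt : Real.sqrt (2*π*(lam''+1)*β'') = Real.sqrt π * d := by
    rw [hd, ← Real.sqrt_mul pi_nonneg]; congr 1; ring
  have hcomb : β'' ^ (-s) * (1 + (y - a₀ - m'') ^ 2 / (2*(lam''+1)*β'')) ^ (-s)
      = (β'' + (y - a₀ - m'') ^ 2 / (2*(lam''+1))) ^ (-s) := by
    rw [← Real.mul_rpow hβ''pos.le (by positivity)]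
    congr 1; field_simp
  rw [hsqrt, ← hcomb]
  have hπs : (0:ℝ) < Real.sqrt π := Real.sqrt_pos.mpr pi_pos
  field_simp
end

section
/- Fix E ≥ 0 groups indexed by e with sizes K_e ≥ 1, real parameters a_e, b_e, positive parameters c_e, and λ > 0. For data x_{e,k} ∈ ℝ define 1/λ' = Σ_e K_e b_e²/c_e² + 1/λ and m' = λ' · Σ_e (b_e/c_e²) · Σ_{k=1}^{K_e} (x_{e,k} − a_e). Then m'²/λ' ≤ Σ_e Σ_{k=1}^{K_e} (x_{e,k} − a_e)²/c_e². Consequently, for any β > 0, the updated parameter β' = β + (1/2)·( Σ_{e,k} (x_{e,k} − a_e)²/c_e² − m'²/λ' ) satisfies β' ≥ β > 0, so the posterior Normal-Gamma parameters are well defined. -/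
/-- The posterior Normal-Gamma parameters are well defined: `m'²/λ'` is bounded by the
weighted sum of squares, hence the updated rate `β'` satisfies `β' ≥ β > 0`. -/
theorem posterior_beta_well_defined
    (E : ℕ) (K : Fin (E + 1) → ℕ) (hK : ∀ e, 1 ≤ K e)
    (a b c : Fin (E + 1) → ℝ) (hc : ∀ e, 0 < c e)
    (lam : ℝ) (hlam : 0 < lam)
    (x : (e : Fin (E + 1)) → Fin (K e) → ℝ)
    (lam' : ℝ) (hlam' : lam'⁻¹ = (∑ e, (K e : ℝ) * (b e) ^ 2 / (c e) ^ 2) + lam⁻¹)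
    (m' : ℝ) (hm' : m' = lam' * ∑ e, (b e / (c e) ^ 2) * ∑ k, (x e k - a e)) :
    m' ^ 2 / lam' ≤ (∑ e, ∑ k, (x e k - a e) ^ 2 / (c e) ^ 2) ∧
    ∀ β : ℝ, 0 < β →
      β ≤ β + (1 / 2) * ((∑ e, ∑ k, (x e k - a e) ^ 2 / (c e) ^ 2) - m' ^ 2 / lam') ∧
      0 < β + (1 / 2) * ((∑ e, ∑ k, (x e k - a e) ^ 2 / (c e) ^ 2) - m' ^ 2 / lam') := by
  set A : ℝ := ∑ e, (K e : ℝ) * (b e) ^ 2 / (c e) ^ 2 with hA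
  set T : ℝ := ∑ e, ∑ k, (x e k - a e) ^ 2 / (c e) ^ 2 with hT
  set S : ℝ := ∑ e, (b e / (c e) ^ 2) * ∑ k, (x e k - a e) with hS
  have hA0 : 0 ≤ A := Finset.sum_nonneg fun e _ =>
    div_nonneg (mul_nonneg (Nat.cast_nonneg _) (sq_nonneg _)) (sq_nonneg _)
  have hT0 : 0 ≤ T := Finset.sum_nonneg fun e _ => Finset.sum_nonneg fun k _ =>
    div_nonneg (sq_nonneg _) (sq_nonneg _)
  have hinv : 0 < lam'⁻¹ := by rw [hlam']; positivity
  have hlam'0 : 0 < lam' := by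
    rcases lt_trichotomy lam' 0 with h | h | h
    · have := inv_nonpos.2 h.le; linarith
    · simp [h] at hinv
    · exact h
  -- Cauchy-Schwarz over the sigma type
  have hCS : S ^ 2 ≤ A * T := by
    have key := Finset.sum_mul_sq_le_sq_mul_sq (Finset.univ : Finset ((e : Fin (E+1)) × Fin (K e)))
      (fun p => b p.1 / c p.1) (fun p => (x p.1 p.2 - a p.1) / c p.1)
    have e1 : ∑ p : (e : Fin (E+1)) × Fin (K e), (b p.1 / c p.1) * ((x p.1 p.2 - a p.1) / c p.1)
        = S := by
      rw [hS, ← Finset.univ_sigma_univ, Finset.sum_sigma]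
      refine Finset.sum_congr rfl fun e _ => ?_
      rw [Finset.mul_sum]
      refine Finset.sum_congr rfl fun k _ => ?_
      ring
    have e2 : ∑ p : (e : Fin (E+1)) × Fin (K e), (b p.1 / c p.1) ^ 2 = A := by
      rw [hA, ← Finset.univ_sigma_univ, Finset.sum_sigma]
      refine Finset.sum_congr rfl fun e _ => ?_
      simp [div_pow, Finset.sum_const, Finset.card_univ]
      ring
    have e3 : ∑ p : (e : Fin (E+1)) × Fin (K e), ((x p.1 p.2 - a p.1) / c p.1) ^ 2 = T := by
      rw [hT, ← Finset.univ_sigma_univ, Finset.sum_sigma]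
      exact Finset.sum_congr rfl fun e _ => Finset.sum_congr rfl fun k _ => by rw [div_pow]
    rw [e1, e2, e3] at key
    exact key
  have hAinv : A ≤ lam'⁻¹ := by rw [hlam']; nlinarith [inv_pos.2 hlam]
  have hmain : m' ^ 2 / lam' ≤ T := by
    have : m' ^ 2 / lam' = lam' * S ^ 2 := by
      rw [hm']; field_simp
    rw [this]
    calc lam' * S ^ 2 ≤ lam' * (A * T) := by nlinarith
      _ ≤ lam' * (lam'⁻¹ * T) := by gcongr
      _ = T := by field_simp
  refine ⟨hmain, fun β hβ => ⟨by linarith, by linarith⟩⟩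
end

section
/- Let m ∈ ℝ, v > 0 and γ > 0. Let μ_N be the Gaussian measure on ℝ with mean m and variance v, and let f : ℝ → ℝ be defined by f(x) = x^{1/γ} for x > 0 and f(x) = 0 for x ≤ 0 (the inverse power transform with left-censoring at 0). Then the pushforward of μ_N under f equals Ψ_{m,v}(0)·δ_0 + μ_c, where δ_0 is the Dirac mass at 0, Ψ_{m,v}(0) = ∫_{−∞}^0 φ_{m,v}(x) dx, and μ_c is the measure on ℝ absolutely continuous with respect to Lebesgue measure with density y ↦ φ_{m,v}(y^γ)·γ·y^{γ−1} for y > 0 and 0 for y ≤ 0. In particular, if Y ~ N(m, v) and Y' = f(Y), then P(Y' = 0) = Ψ_{m,v}(0) and the continuous part of the law of Y' has density φ_{m,v}(y'^γ)·γ·y'^{γ−1} on (0, ∞). -/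
open MeasureTheory ProbabilityTheory

lemma normalPdf_eq_gaussianPDFReal (m : ℝ) (v : NNReal) (x : ℝ) :
    normalPdf m (v : ℝ) x = gaussianPDFReal m v x := by
  unfold normalPdf gaussianPDFReal
  congr 1
  rw [Real.sqrt_eq_rpow, ← Real.rpow_neg (by positivity)]
  norm_num

lemma rpow_image_Ioc (γ : ℝ) (hγ : 0 < γ) (a : ℝ) (ha : 0 ≤ a) :
    (fun y : ℝ => y ^ γ) '' Set.Ioc 0 a = Set.Ioc 0 (a ^ γ) := by
  ext z
  constructor
  · rintro ⟨y, ⟨hy0, hya⟩, rfl⟩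
    exact ⟨Real.rpow_pos_of_pos hy0 γ, Real.rpow_le_rpow hy0.le hya hγ.le⟩
  · rintro ⟨hz0, hza⟩
    refine ⟨z ^ γ⁻¹, ⟨Real.rpow_pos_of_pos hz0 _, ?_⟩, Real.rpow_inv_rpow hz0.le hγ.ne'⟩
    exact (Real.rpow_inv_le_iff_of_pos hz0.le ha hγ).mpr hza

lemma rpow_hasDeriv (γ : ℝ) {a y : ℝ} (hy : y ∈ Set.Ioc (0:ℝ) a) :
    HasDerivWithinAt (fun y : ℝ => y ^ γ) (γ * y ^ (γ - 1)) (Set.Ioc 0 a) y :=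
  (Real.hasDerivAt_rpow_const (Or.inl hy.1.ne')).hasDerivWithinAt

lemma rpow_injOn (γ : ℝ) (hγ : 0 < γ) (a : ℝ) :
    Set.InjOn (fun y : ℝ => y ^ γ) (Set.Ioc 0 a) :=
  (Real.rpow_left_injOn hγ.ne').mono (fun y hy => hy.1.le)

/-- Change of variables for the Gaussian density on `(0, a]`. -/
lemma cov_integral (m : ℝ) (v : NNReal) (γ : ℝ) (hγ : 0 < γ) (a : ℝ) (ha : 0 ≤ a) :
    ∫ x in Set.Ioc 0 (a ^ γ), gaussianPDFReal m v x
      = ∫ y in Set.Ioc 0 a, |γ * y ^ (γ - 1)| • gaussianPDFReal m v (y ^ γ) := by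
  rw [← rpow_image_Ioc γ hγ a ha]
  exact integral_image_eq_integral_abs_deriv_smul measurableSet_Ioc
    (fun y hy => rpow_hasDeriv γ hy) (rpow_injOn γ hγ a) _

lemma cov_integrable (m : ℝ) (v : NNReal) (γ : ℝ) (hγ : 0 < γ) (a : ℝ) :
    IntegrableOn (fun y : ℝ => |γ * y ^ (γ - 1)| • gaussianPDFReal m v (y ^ γ))
      (Set.Ioc 0 a) := by
  rw [← integrableOn_image_iff_integrableOn_abs_deriv_smul measurableSet_Ioc
    (fun y hy => rpow_hasDeriv γ hy) (rpow_injOn γ hγ a)]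
  exact (integrable_gaussianPDFReal m v).integrableOn

lemma density_eq_on (m : ℝ) (v : NNReal) (γ : ℝ) (hγ : 0 < γ) {a y : ℝ}
    (hy : y ∈ Set.Ioc (0:ℝ) a) :
    |γ * y ^ (γ - 1)| • gaussianPDFReal m v (y ^ γ)
      = gaussianPDFReal m v (y ^ γ) * γ * y ^ (γ - 1) := by
  have hyp : (0:ℝ) < y ^ (γ - 1) := Real.rpow_pos_of_pos hy.1 _
  rw [abs_of_pos (by positivity), smul_eq_mul]
  ring

/-- Pushing forward a Gaussian law through the left-censored inverse power transform
`x ↦ x^(1/γ) 𝟙_{x > 0}` yields a zero-inflated law: an atom at `0` of mass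
`Ψ_{m,v}(0)` plus an absolutely continuous part with density
`y ↦ φ_{m,v}(y^γ) γ y^(γ-1)` on `(0, ∞)` (the Tobit precipitation model). -/
theorem tobit_pushforward (m : ℝ) (v : NNReal) (hv : 0 < v) (γ : ℝ) (hγ : 0 < γ) :
    Measure.map (fun x : ℝ => if 0 < x then x ^ (1 / γ) else 0) (gaussianReal m v) =
      ENNReal.ofReal (∫ x in Set.Iic (0 : ℝ), normalPdf m (v : ℝ) x) • Measure.dirac (0 : ℝ) +
        volume.withDensity (fun y : ℝ =>
          ENNReal.ofReal
            (if 0 < y then normalPdf m (v : ℝ) (y ^ γ) * γ * y ^ (γ - 1) else 0)) := by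
  have hv' : v ≠ 0 := hv.ne'
  set f : ℝ → ℝ := fun x => if 0 < x then x ^ (1 / γ) else 0 with hf_def
  have hf : Measurable f := by
    apply Measurable.ite measurableSet_Ioi _ measurable_const
    exact measurable_id.pow_const _
  have : IsProbabilityMeasure (Measure.map f (gaussianReal m v)) :=
    Measure.isProbabilityMeasure_map hf.aemeasurable
  -- normalPdf rewriting
  have hnp : ∀ x, normalPdf m (v : ℝ) x = gaussianPDFReal m v x :=
    normalPdf_eq_gaussianPDFReal m v
  refine Measure.ext_of_Iic _ _ (fun a => ?_)
  rw [Measure.map_apply hf measurableSet_Iic]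
  rw [Measure.add_apply, Measure.smul_apply, Measure.dirac_apply,
    withDensity_apply _ measurableSet_Iic, smul_eq_mul]
  by_cases ha : 0 ≤ a
  · -- preimage is Iic (a ^ γ)
    have hpre : f ⁻¹' Set.Iic a = Set.Iic (a ^ γ) := by
      ext x
      simp only [Set.mem_preimage, Set.mem_Iic, hf_def]
      by_cases hx : 0 < x
      · rw [if_pos hx, one_div,
          Real.rpow_inv_le_iff_of_pos hx.le ha hγ]
      · rw [if_neg hx]
        push_neg at hx
        constructor
        · intro _; exact hx.trans (Real.rpow_nonneg ha γ)
        · intro _; exact ha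
    rw [hpre, gaussianReal_apply_eq_integral _ hv']
    have haγ : 0 ≤ a ^ γ := Real.rpow_nonneg ha γ
    -- split the integral
    have hsplit : Set.Iic (a ^ γ) = Set.Iic 0 ∪ Set.Ioc 0 (a ^ γ) :=
      (Set.Iic_union_Ioc_eq_Iic haγ).symm
    have hint : Integrable (gaussianPDFReal m v) := integrable_gaussianPDFReal m v
    rw [hsplit, setIntegral_union (Set.Iic_disjoint_Ioc le_rfl) measurableSet_Ioc
      hint.integrableOn hint.integrableOn]
    -- relate the density-part integrals
    have hcov := cov_integral m v γ hγ a ha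
    have hIicInt : (0:ℝ) ≤ ∫ x in Set.Iic (0:ℝ), gaussianPDFReal m v x :=
      setIntegral_nonneg measurableSet_Iic (fun x _ => gaussianPDFReal_nonneg m v x)
    have hIocInt : (0:ℝ) ≤ ∫ x in Set.Ioc (0:ℝ) (a ^ γ), gaussianPDFReal m v x :=
      setIntegral_nonneg measurableSet_Ioc (fun x _ => gaussianPDFReal_nonneg m v x)
    rw [ENNReal.ofReal_add hIicInt hIocInt]
    congr 1
    · -- atom part
      rw [Set.indicator_of_mem (Set.mem_Iic.mpr ha), Pi.one_apply, mul_one]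
      congr 1
      exact setIntegral_congr_fun measurableSet_Iic (fun x _ => (hnp x).symm)
    · -- density part
      have hIic : Set.Iic a = Set.Iic 0 ∪ Set.Ioc 0 a := (Set.Iic_union_Ioc_eq_Iic ha).symm
      rw [hIic, lintegral_union measurableSet_Ioc (Set.Iic_disjoint_Ioc le_rfl)]
      have hz : ∫⁻ y in Set.Iic (0:ℝ),
          ENNReal.ofReal
            (if 0 < y then normalPdf m (v : ℝ) (y ^ γ) * γ * y ^ (γ - 1) else 0) = 0 := by
        rw [setLIntegral_congr_fun measurableSet_Iic
          (fun y hy => ?_), lintegral_zero]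
        rw [if_neg (not_lt.mpr hy)]
        simp
      rw [hz, zero_add]
      -- now both are over Ioc 0 a / Ioc 0 (a^γ)
      rw [hcov]
      have h1 : ∫ y in Set.Ioc (0:ℝ) a, |γ * y ^ (γ - 1)| • gaussianPDFReal m v (y ^ γ)
          = ∫ y in Set.Ioc (0:ℝ) a,
              (if 0 < y then normalPdf m (v : ℝ) (y ^ γ) * γ * y ^ (γ - 1) else 0) := by
        refine setIntegral_congr_fun measurableSet_Ioc (fun y hy => ?_)
        rw [density_eq_on m v γ hγ hy, if_pos hy.1, hnp]
      rw [h1]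
      rw [ofReal_integral_eq_lintegral_ofReal]
      · refine ((cov_integrable m v γ hγ a).congr_fun (fun y hy => ?_)
          measurableSet_Ioc)
        dsimp only
        rw [density_eq_on m v γ hγ hy, if_pos hy.1, hnp]
      · refine Filter.Eventually.of_forall (fun y => ?_)
        simp only [Pi.zero_apply]
        by_cases hy : 0 < y
        · rw [if_pos hy]
          have h2 := Real.rpow_pos_of_pos hy (γ - 1)
          have h3 := gaussianPDFReal_nonneg m v (y ^ γ)
          rw [hnp]
          positivity
        · rw [if_neg hy]
  · -- a < 0 : everything is zero
    push_neg at ha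
    have hpre : f ⁻¹' Set.Iic a = ∅ := by
      ext x
      simp only [Set.mem_preimage, Set.mem_Iic, Set.mem_empty_iff_false, iff_false, not_le,
        hf_def]
      by_cases hx : 0 < x
      · rw [if_pos hx]; exact ha.trans_le (Real.rpow_nonneg hx.le _)
      · rw [if_neg hx]; exact ha
    rw [hpre, measure_empty]
    rw [Set.indicator_of_notMem (by simpa using ha.not_ge), mul_zero, zero_add]
    rw [setLIntegral_congr_fun measurableSet_Iic
      (fun y hy => ?_), lintegral_zero]
    rw [if_neg (by simp at hy ⊢; linarith)]
    simp
end
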